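/- In a Euclidean Hurwitz algebra, if u and v are orthonormal vectors each orthogonal to the unit element 1, then the product u · v is a unit vector orthogonal to each of 1, u, and v. -/

import Mathlib

section aux

variable {A : Type*} [NormedAddCommGroup A] [InnerProductSpace ℝ A]

lemma hurwitz_left (mul : A →ₗ[ℝ] A →ₗ[ℝ] A)
    (hmon : ∀ x y, ‖mul x y‖ = ‖x‖ * ‖y‖) (x y z : A) :
    (inner ℝ (mul x y) (mul x z) : ℝ) = ‖x‖ ^ 2 * inner ℝ y z := by
  have h1 : ‖mul x y + mul x z‖ = ‖x‖ * ‖y + z‖ := by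
    rw [← map_add]; exact hmon x (y + z)
  have h1' : ‖mul x y + mul x z‖ ^ 2 = ‖x‖ ^ 2 * ‖y + z‖ ^ 2 := by rw [h1]; ring
  have h2 : ‖mul x y‖ ^ 2 = ‖x‖ ^ 2 * ‖y‖ ^ 2 := by rw [hmon]; ring
  have h3 : ‖mul x z‖ ^ 2 = ‖x‖ ^ 2 * ‖z‖ ^ 2 := by rw [hmon]; ring
  have e1 := norm_add_sq_real (mul x y) (mul x z)
  have e2 := norm_add_sq_real y z
  nlinarith [e1, e2, h1', h2, h3]

lemma hurwitz_right (mul : A →ₗ[ℝ] A →ₗ[ℝ] A)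
    (hmon : ∀ x y, ‖mul x y‖ = ‖x‖ * ‖y‖) (x y z : A) :
    (inner ℝ (mul x z) (mul y z) : ℝ) = ‖z‖ ^ 2 * inner ℝ x y := by
  have h1 : ‖mul x z + mul y z‖ = ‖x + y‖ * ‖z‖ := by
    rw [show mul x z + mul y z = mul (x + y) z by rw [map_add]; rfl]
    exact hmon (x + y) z
  have h1' : ‖mul x z + mul y z‖ ^ 2 = ‖x + y‖ ^ 2 * ‖z‖ ^ 2 := by rw [h1]; ring
  have h2 : ‖mul x z‖ ^ 2 = ‖x‖ ^ 2 * ‖z‖ ^ 2 := by rw [hmon]; ring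
  have h3 : ‖mul y z‖ ^ 2 = ‖y‖ ^ 2 * ‖z‖ ^ 2 := by rw [hmon]; ring
  have e1 := norm_add_sq_real (mul x z) (mul y z)
  have e2 := norm_add_sq_real x y
  nlinarith [e1, e2, h1', h2, h3]

lemma hurwitz_exchange (mul : A →ₗ[ℝ] A →ₗ[ℝ] A)
    (hmon : ∀ x y, ‖mul x y‖ = ‖x‖ * ‖y‖) (x y z w : A) :
    (inner ℝ (mul x y) (mul z w) : ℝ) + inner ℝ (mul z y) (mul x w)
      = 2 * inner ℝ x z * inner ℝ y w := by
  have h1 := hurwitz_right mul hmon (x + z) x y  -- not needed; do polarization of left lemma in x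
  have key : (inner ℝ (mul (x + z) y) (mul (x + z) w) : ℝ) = ‖x + z‖ ^ 2 * inner ℝ y w :=
    hurwitz_left mul hmon (x + z) y w
  have exy : mul (x + z) y = mul x y + mul z y := by rw [map_add]; rfl
  have exw : mul (x + z) w = mul x w + mul z w := by rw [map_add]; rfl
  rw [exy, exw, norm_add_sq_real] at key
  simp only [inner_add_left, inner_add_right] at key
  have l1 : (inner ℝ (mul x y) (mul x w) : ℝ) = ‖x‖ ^ 2 * inner ℝ y w :=
    hurwitz_left mul hmon x y w
  have l2 : (inner ℝ (mul z y) (mul z w) : ℝ) = ‖z‖ ^ 2 * inner ℝ y w :=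
    hurwitz_left mul hmon z y w
  have sym : (inner ℝ (mul x y) (mul z w) : ℝ) = inner ℝ (mul z w) (mul x y) :=
    real_inner_comm _ _
  nlinarith [key, l1, l2, sym]

end aux

theorem stmt_4 {A : Type*} [NormedAddCommGroup A] [InnerProductSpace ℝ A]
    (mul : A →ₗ[ℝ] A →ₗ[ℝ] A) (e : A) (he : ‖e‖ = 1)
    (hul : ∀ x, mul e x = x) (hur : ∀ x, mul x e = x)
    (hmon : ∀ x y, ‖mul x y‖ = ‖x‖ * ‖y‖)
    (u v : A) (hu : ‖u‖ = 1) (hv : ‖v‖ = 1)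
    (hue : (inner ℝ u e : ℝ) = 0) (hve : (inner ℝ v e : ℝ) = 0)
    (huv : (inner ℝ u v : ℝ) = 0) :
    ‖mul u v‖ = 1 ∧ (inner ℝ (mul u v) e : ℝ) = 0 ∧
      (inner ℝ (mul u v) u : ℝ) = 0 ∧ (inner ℝ (mul u v) v : ℝ) = 0 := by
  refine ⟨by rw [hmon, hu, hv]; ring, ?_, ?_, ?_⟩
  · have := hurwitz_exchange mul hmon u v e e
    simp only [hul, hur] at this
    have hvu : (inner ℝ v u : ℝ) = 0 := by rw [real_inner_comm]; exact huv
    have hev : (inner ℝ e v : ℝ) = 0 := by rw [real_inner_comm]; exact hve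
    have heu : (inner ℝ e u : ℝ) = 0 := by rw [real_inner_comm]; exact hue
    nlinarith [this, hvu, hue, hev]
  · have := hurwitz_left mul hmon u v e
    rw [hur] at this
    rw [this, hu, hve]; ring
  · have := hurwitz_right mul hmon u e v
    rw [hul] at this
    rw [this, hv, hue]; ring
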